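/- Assume Acc is absorbing. Then there exists N₀ ∈ ℕ, independent of γ, such that for every γ ∈ (0,1) and every s ∈ S: the two inequalities r_n·μ_s(Safeᶜ) ≤ V^γ(s) and V^γ(s) < r_n·μ_s(Safeᶜ)·γ^{N₀} hold if and only if μ_s(Safe) < 1, where V^γ denotes the value function computed with discount parameter γ. -/

import Mathlib

open MeasureTheory Set
open scoped ENNReal Classical

variable {S : Type*}

def IsPathMeasure [MeasurableSpace S] (P : S → PMF S) (μ : S → Measure (ℕ → S)) : Prop :=
  (∀ s, IsProbabilityMeasure (μ s)) ∧
    ∀ (s : S) (n : ℕ) (x : ℕ → S),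
      μ s {ω | ∀ i ≤ n, ω i = x i} =
        (if x 0 = s then 1 else 0) * ∏ i ∈ Finset.range n, (P (x i)) (x (i + 1))

noncomputable def Rw (Acc : Set S) (γacc rn : ℝ) (s : S) : ℝ :=
  if s ∈ Acc then (1 - γacc) * rn else 0

noncomputable def Γw (Acc : Set S) (γacc γ : ℝ) (s : S) : ℝ :=
  if s ∈ Acc then γacc else γ

noncomputable def Ret (Acc : Set S) (γacc γ rn : ℝ) (ω : ℕ → S) : ℝ :=
  ∑' t : ℕ, Rw Acc γacc rn (ω (t + 1)) * ∏ k ∈ Finset.range t, Γw Acc γacc γ (ω (k + 1))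

noncomputable def Val [MeasurableSpace S] (Acc : Set S) (γacc γ rn : ℝ)
    (μ : S → Measure (ℕ → S)) (s : S) : ℝ :=
  ∫ ω, Ret Acc γacc γ rn ω ∂ (μ s)

section Chain
variable [Fintype S]

noncomputable def stp (P : S → PMF S) (s s' : S) : ℝ := ((P s) s').toReal

lemma stp_nonneg (P : S → PMF S) (s s' : S) : 0 ≤ stp P s s' := ENNReal.toReal_nonneg

lemma sum_stp (P : S → PMF S) (s : S) : ∑ s', stp P s s' = 1 := by
  have h1 : ∑' s', (P s) s' = 1 := (P s).tsum_coe
  rw [tsum_fintype] at h1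
  have h2 : (∑ s', (P s) s').toReal = ∑ s', stp P s s' :=
    ENNReal.toReal_sum (fun a _ => PMF.apply_ne_top _ _)
  rw [h1] at h2; simpa using h2.symm

lemma stp_absorb {P : S → PMF S} {Acc : Set S} (habs : ∀ s ∈ Acc, (P s).support ⊆ Acc)
    {s s' : S} (hs : s ∈ Acc) (hs' : s' ∉ Acc) : stp P s s' = 0 := by
  have : (P s) s' = 0 := by
    by_contra h
    exact hs' (habs s hs ((PMF.mem_support_iff (P s) s').2 h))
  simp [stp, this]

noncomputable def phit (P : S → PMF S) (Acc : Set S) : ℕ → S → ℝ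
  | 0, s => if s ∈ Acc then 1 else 0
  | n+1, s => if s ∈ Acc then 0 else ∑ s', stp P s s' * phit P Acc n s'

lemma phit_zero (P : S → PMF S) (Acc : Set S) (s : S) :
    phit P Acc 0 s = if s ∈ Acc then 1 else 0 := rfl

lemma phit_succ (P : S → PMF S) (Acc : Set S) (n : ℕ) (s : S) :
    phit P Acc (n+1) s = if s ∈ Acc then 0 else ∑ s', stp P s s' * phit P Acc n s' := rfl

lemma phit_nonneg (P : S → PMF S) (Acc : Set S) : ∀ (n : ℕ) (s : S), 0 ≤ phit P Acc n s := by
  intro n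
  induction n with
  | zero => intro s; rw [phit_zero]; split <;> norm_num
  | succ n ih =>
      intro s; rw [phit_succ]; split
      · exact le_rfl
      · exact Finset.sum_nonneg fun s' _ => mul_nonneg (stp_nonneg _ _ _) (ih s')

lemma phit_succ_mem (P : S → PMF S) (Acc : Set S) (n : ℕ) {s : S} (hs : s ∈ Acc) :
    phit P Acc (n+1) s = 0 := by rw [phit_succ, if_pos hs]

lemma phit_succ_not (P : S → PMF S) (Acc : Set S) (n : ℕ) {s : S} (hs : s ∉ Acc) :
    phit P Acc (n+1) s = ∑ s', stp P s s' * phit P Acc n s' := by rw [phit_succ, if_neg hs]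

lemma sum_range_phit_le_one (P : S → PMF S) (Acc : Set S) :
    ∀ (N : ℕ) (s : S), ∑ n ∈ Finset.range N, phit P Acc n s ≤ 1 := by
  intro N
  induction N with
  | zero => intro s; simp
  | succ N ih =>
      intro s
      rw [Finset.sum_range_succ']
      by_cases hs : s ∈ Acc
      · have h1 : ∀ n ∈ Finset.range N, phit P Acc (n+1) s = 0 :=
          fun n _ => phit_succ_mem P Acc n hs
        rw [Finset.sum_congr rfl h1]
        simp [phit_zero, hs]
      · have h1 : ∀ n ∈ Finset.range N, phit P Acc (n+1) s
            = ∑ s', stp P s s' * phit P Acc n s' :=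
          fun n _ => phit_succ_not P Acc n hs
        rw [Finset.sum_congr rfl h1, Finset.sum_comm, phit_zero, if_neg hs, add_zero]
        calc ∑ s', ∑ n ∈ Finset.range N, stp P s s' * phit P Acc n s'
            = ∑ s', stp P s s' * ∑ n ∈ Finset.range N, phit P Acc n s' := by
              simp [Finset.mul_sum]
          _ ≤ ∑ s', stp P s s' * 1 := by
              refine Finset.sum_le_sum fun s' _ => ?_
              exact mul_le_mul_of_nonneg_left (ih s') (stp_nonneg P s s')
          _ = 1 := by simp [sum_stp]

lemma summable_phit (P : S → PMF S) (Acc : Set S) (s : S) :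
    Summable fun n => phit P Acc n s :=
  summable_of_sum_range_le (fun n => phit_nonneg P Acc n s)
    (fun n => sum_range_phit_le_one P Acc n s)

noncomputable def hh (P : S → PMF S) (Acc : Set S) (s : S) : ℝ := ∑' n, phit P Acc n s

lemma hh_nonneg (P : S → PMF S) (Acc : Set S) (s : S) : 0 ≤ hh P Acc s :=
  tsum_nonneg fun n => phit_nonneg P Acc n s

lemma hh_le_one (P : S → PMF S) (Acc : Set S) (s : S) : hh P Acc s ≤ 1 :=
  Summable.tsum_le_of_sum_range_le (summable_phit P Acc s) (fun n => sum_range_phit_le_one P Acc n s)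

lemma phit_le_hh (P : S → PMF S) (Acc : Set S) (n : ℕ) (s : S) :
    phit P Acc n s ≤ hh P Acc s :=
  Summable.le_tsum (summable_phit P Acc s) n (fun j _ => phit_nonneg P Acc j s)

noncomputable def uu (P : S → PMF S) (Acc : Set S) (j : ℕ) (s : S) : ℝ :=
  ∑' n, phit P Acc (n + (j+1)) s

lemma summable_phit_add (P : S → PMF S) (Acc : Set S) (k : ℕ) (s : S) :
    Summable fun n => phit P Acc (n + k) s :=
  (summable_nat_add_iff k).2 (summable_phit P Acc s)

lemma uu_eq (P : S → PMF S) (Acc : Set S) (j : ℕ) (s : S) :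
    uu P Acc j s = hh P Acc s - ∑ n ∈ Finset.range (j+1), phit P Acc n s := by
  have := Summable.sum_add_tsum_nat_add (f := fun n => phit P Acc n s) (j+1) (summable_phit P Acc s)
  unfold uu hh
  linarith

lemma uu_nonneg (P : S → PMF S) (Acc : Set S) (j : ℕ) (s : S) : 0 ≤ uu P Acc j s :=
  tsum_nonneg fun n => phit_nonneg P Acc _ s

lemma uu_le_hh (P : S → PMF S) (Acc : Set S) (j : ℕ) (s : S) : uu P Acc j s ≤ hh P Acc s := by
  rw [uu_eq]
  have : 0 ≤ ∑ n ∈ Finset.range (j+1), phit P Acc n s :=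
    Finset.sum_nonneg fun n _ => phit_nonneg P Acc n s
  linarith

lemma uu_succ_tsum (P : S → PMF S) (Acc : Set S) (j : ℕ) (s : S) :
    uu P Acc j s = phit P Acc (j+1) s + uu P Acc (j+1) s := by
  unfold uu
  rw [Summable.tsum_eq_zero_add (summable_phit_add P Acc (j+1) s)]
  simp only [zero_add]
  congr 1
  apply tsum_congr
  intro n
  congr 1
  omega

lemma phit_le_uu (P : S → PMF S) (Acc : Set S) (j : ℕ) (s : S) :
    phit P Acc (j+1) s ≤ uu P Acc j s := by
  rw [uu_succ_tsum]
  linarith [uu_nonneg P Acc (j+1) s]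

lemma uu_antitone (P : S → PMF S) (Acc : Set S) {i j : ℕ} (h : i ≤ j) (s : S) :
    uu P Acc j s ≤ uu P Acc i s := by
  induction j with
  | zero => simp_all
  | succ j ih =>
      rcases Nat.lt_or_ge i (j+1) with h' | h'
      · have := ih (by omega)
        have h2 := uu_succ_tsum P Acc j s
        have h3 := phit_nonneg P Acc (j+1) s
        linarith
      · have : i = j + 1 := by omega
        subst this; exact le_rfl

noncomputable def Topb (P : S → PMF S) (Acc : Set S) (v : S → ℝ) : S → ℝ :=
  fun s => if s ∈ Acc then 0 else ∑ s', stp P s s' * v s'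

lemma Topb_mono (P : S → PMF S) (Acc : Set S) {v w : S → ℝ} (h : ∀ s, v s ≤ w s) :
    ∀ s, Topb P Acc v s ≤ Topb P Acc w s := by
  intro s
  unfold Topb
  split
  · exact le_rfl
  · exact Finset.sum_le_sum fun s' _ => mul_le_mul_of_nonneg_left (h s') (stp_nonneg P s s')

lemma Topb_iter_mono (P : S → PMF S) (Acc : Set S) (k : ℕ) :
    ∀ {v w : S → ℝ}, (∀ s, v s ≤ w s) → ∀ s, (Topb P Acc)^[k] v s ≤ (Topb P Acc)^[k] w s := by
  induction k with
  | zero => intro v w h s; exact h s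
  | succ k ih =>
      intro v w h s
      rw [Function.iterate_succ_apply, Function.iterate_succ_apply]
      exact ih (Topb_mono P Acc h) s

lemma Topb_smul (P : S → PMF S) (Acc : Set S) (a : ℝ) (v : S → ℝ) :
    Topb P Acc (fun s => a * v s) = fun s => a * Topb P Acc v s := by
  funext s
  unfold Topb
  split
  · ring
  · rw [Finset.mul_sum]; congr 1; funext s'; ring

lemma Topb_iter_smul (P : S → PMF S) (Acc : Set S) (k : ℕ) (a : ℝ) (v : S → ℝ) :
    (Topb P Acc)^[k] (fun s => a * v s) = fun s => a * (Topb P Acc)^[k] v s := by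
  induction k generalizing v with
  | zero => rfl
  | succ k ih =>
      rw [Function.iterate_succ_apply, Topb_smul, ih, Function.iterate_succ_apply]

lemma uu_zero_eq (P : S → PMF S) (Acc : Set S) :
    uu P Acc 0 = Topb P Acc (hh P Acc) := by
  funext s
  unfold uu Topb
  by_cases hs : s ∈ Acc
  · rw [if_pos hs]
    have : ∀ n : ℕ, phit P Acc (n + 1) s = 0 := fun n => phit_succ_mem P Acc n hs
    simp [this]
  · rw [if_neg hs]
    have h1 : ∀ n : ℕ, phit P Acc (n + 1) s = ∑ s', stp P s s' * phit P Acc n s' :=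
      fun n => phit_succ_not P Acc n hs
    calc ∑' n, phit P Acc (n + 1) s = ∑' n, ∑ s', stp P s s' * phit P Acc n s' := by
          exact tsum_congr fun n => h1 n
      _ = ∑ s', ∑' n, stp P s s' * phit P Acc n s' := by
          exact Summable.tsum_finsetSum fun s' _ => (summable_phit P Acc s').mul_left _
      _ = ∑ s', stp P s s' * hh P Acc s' := by
          refine Finset.sum_congr rfl fun s' _ => ?_
          exact tsum_mul_left

lemma uu_succ_eq (P : S → PMF S) (Acc : Set S) (j : ℕ) :
    uu P Acc (j+1) = Topb P Acc (uu P Acc j) := by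
  funext s
  unfold uu Topb
  by_cases hs : s ∈ Acc
  · rw [if_pos hs]
    have : ∀ n : ℕ, phit P Acc (n + (j+2)) s = 0 := by
      intro n
      rw [show n + (j+2) = (n + (j+1)) + 1 by omega]
      exact phit_succ_mem P Acc _ hs
    simp [this]
  · rw [if_neg hs]
    have h1 : ∀ n : ℕ, phit P Acc (n + (j+2)) s
        = ∑ s', stp P s s' * phit P Acc (n + (j+1)) s' := by
      intro n
      rw [show n + (j+2) = (n + (j+1)) + 1 by omega]
      exact phit_succ_not P Acc _ hs
    calc ∑' n, phit P Acc (n + (j+2)) s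
        = ∑' n, ∑ s', stp P s s' * phit P Acc (n + (j+1)) s' := tsum_congr fun n => h1 n
      _ = ∑ s', ∑' n, stp P s s' * phit P Acc (n + (j+1)) s' := by
          exact Summable.tsum_finsetSum fun s' _ => (summable_phit_add P Acc (j+1) s').mul_left _
      _ = ∑ s', stp P s s' * ∑' n, phit P Acc (n + (j+1)) s' := by
          refine Finset.sum_congr rfl fun s' _ => ?_
          exact tsum_mul_left

lemma uu_iter (P : S → PMF S) (Acc : Set S) : ∀ j, uu P Acc j = (Topb P Acc)^[j+1] (hh P Acc) := by
  intro j
  induction j with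
  | zero => simpa using uu_zero_eq P Acc
  | succ j ih =>
      rw [uu_succ_eq, ih, ← Function.iterate_succ_apply' (Topb P Acc) (j+1)]

lemma phit_le_one (P : S → PMF S) (Acc : Set S) (n : ℕ) (s : S) : phit P Acc n s ≤ 1 := by
  have h1 : phit P Acc n s ≤ ∑ m ∈ Finset.range (n+1), phit P Acc m s :=
    Finset.single_le_sum (f := fun m => phit P Acc m s)
      (fun m _ => phit_nonneg P Acc m s) (Finset.mem_range.2 (by omega))
  exact le_trans h1 (sum_range_phit_le_one P Acc (n+1) s)

end Chain
section Reach
variable [Fintype S] [Nonempty S]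

lemma reach (P : S → PMF S) (Acc : Set S) (s : S) (n : ℕ) (hpos : 0 < phit P Acc n s) :
    ∃ m < Fintype.card S, 0 < phit P Acc m s := by
  classical
  set K := Fintype.card S with hK
  have hK1 : 1 ≤ K := Fintype.card_pos
  set R : ℕ → Finset S := fun k => Finset.univ.filter (fun a => ∃ m ≤ k, 0 < phit P Acc m a)
    with hR
  have memR : ∀ k a, a ∈ R k ↔ ∃ m ≤ k, 0 < phit P Acc m a := by
    intro k a; simp [hR]
  have hmono : ∀ k, R k ⊆ R (k+1) := by
    intro k a ha
    rw [memR] at *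
    obtain ⟨m, hm, h⟩ := ha
    exact ⟨m, by omega, h⟩
  have hmono' : ∀ i j, i ≤ j → R i ⊆ R j := by
    intro i j hij
    induction j with
    | zero => have : i = 0 := by omega
              subst this; exact subset_rfl
    | succ j ih =>
        rcases Nat.lt_or_ge i (j+1) with h' | h'
        · exact (ih (by omega)).trans (hmono j)
        · have : i = j + 1 := by omega
          subst this; exact subset_rfl
  have hterm : ∀ (k : ℕ) (a : S), 0 < phit P Acc (k+1) a →
      a ∉ Acc ∧ ∃ b, 0 < stp P a b ∧ 0 < phit P Acc k b := by
    intro k a h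
    by_cases hA : a ∈ Acc
    · rw [phit_succ_mem P Acc k hA] at h; exact absurd h (lt_irrefl 0)
    refine ⟨hA, ?_⟩
    rw [phit_succ_not P Acc k hA] at h
    by_contra hc
    push_neg at hc
    have hz : ∀ b ∈ Finset.univ, stp P a b * phit P Acc k b = 0 := by
      intro b _
      rcases (stp_nonneg P a b).lt_or_eq with h1 | h1
      · have h2 : phit P Acc k b ≤ 0 := hc b h1
        have h3 := phit_nonneg P Acc k b
        have : phit P Acc k b = 0 := le_antisymm h2 h3
        simp [this]
      · simp [← h1]
    rw [Finset.sum_eq_zero hz] at h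
    exact lt_irrefl 0 h
  have hstep : ∀ k a, a ∈ R (k+1) ↔ (a ∈ R k ∨ (a ∉ Acc ∧ ∃ b, 0 < stp P a b ∧ b ∈ R k)) := by
    intro k a
    constructor
    · rw [memR]; rintro ⟨m, hm, h⟩
      rcases Nat.lt_or_ge m (k+1) with h' | h'
      · exact Or.inl ((memR k a).2 ⟨m, by omega, h⟩)
      · have hm' : m = k + 1 := by omega
        subst hm'
        obtain ⟨hA, b, hb, hb'⟩ := hterm k a h
        exact Or.inr ⟨hA, b, hb, (memR k b).2 ⟨k, le_rfl, hb'⟩⟩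
    · rintro (h | ⟨hA, b, hb, hbR⟩)
      · exact hmono k h
      · rw [memR] at hbR ⊢
        obtain ⟨m, hm, hmb⟩ := hbR
        refine ⟨m+1, by omega, ?_⟩
        rw [phit_succ_not P Acc m hA]
        have h1 : stp P a b * phit P Acc m b ≤ ∑ b', stp P a b' * phit P Acc m b' :=
          Finset.single_le_sum (f := fun b' => stp P a b' * phit P Acc m b')
            (fun b' _ => mul_nonneg (stp_nonneg P a b') (phit_nonneg P Acc m b'))
            (Finset.mem_univ b)
        nlinarith [mul_pos hb hmb]
  have hstab : ∀ k, R (k+1) = R k → ∀ j, R (k + j) = R k := by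
    intro k hk j
    induction j with
    | zero => rfl
    | succ j ih =>
        ext a
        rw [show k + (j+1) = (k+j)+1 from rfl, hstep (k+j) a, ih, ← hstep k a, hk]
  have hgrow : ∀ k, (∀ j < k, R (j+1) ≠ R j) → (R 0).card + k ≤ (R k).card := by
    intro k
    induction k with
    | zero => simp
    | succ k ih =>
        intro h
        have h1 : (R 0).card + k ≤ (R k).card := ih (fun j hj => h j (by omega))
        have h2 : R k ⊂ R (k+1) :=
          (Finset.ssubset_iff_subset_ne).2 ⟨hmono k, fun he => h k (by omega) he.symm⟩
        have := Finset.card_lt_card h2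
        omega
  have hdesc : ∀ (m : ℕ) (a : S), 0 < phit P Acc m a → ∃ b, 0 < phit P Acc 0 b := by
    intro m
    induction m with
    | zero => exact fun a h => ⟨a, h⟩
    | succ m ih =>
        intro a h
        obtain ⟨_, b, _, hb⟩ := hterm m a h
        exact ih b hb
  obtain ⟨b0, hb0⟩ := hdesc n s hpos
  have hcard0 : 1 ≤ (R 0).card :=
    Finset.card_pos.2 ⟨b0, (memR 0 b0).2 ⟨0, le_rfl, hb0⟩⟩
  have hsRn : s ∈ R n := (memR n s).2 ⟨n, le_rfl, hpos⟩
  have hsmem : s ∈ R (K-1) := by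
    by_cases hstabex : ∃ k < K - 1, R (k+1) = R k
    · obtain ⟨k, hk, he⟩ := hstabex
      have hconst := hstab k he
      rcases le_or_gt n (K-1) with h' | h'
      · exact hmono' n (K-1) h' hsRn
      · have h1 : R n = R k := by
          have := hconst (n - k)
          rwa [show k + (n - k) = n by omega] at this
        exact hmono' k (K-1) (by omega) (h1 ▸ hsRn)
    · push_neg at hstabex
      have hgr := hgrow (K-1) hstabex
      have hle : (R (K-1)).card ≤ K := by
        simpa [hK] using Finset.card_le_univ (R (K-1))
      have hcardK : (R (K-1)).card = K := by omega
      have : R (K-1) = Finset.univ := Finset.eq_univ_of_card _ (by simpa [hK] using hcardK)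
      rw [this]; exact Finset.mem_univ s
  rw [memR] at hsmem
  obtain ⟨m, hm, h⟩ := hsmem
  exact ⟨m, by omega, h⟩

lemma hh_pos_exists (P : S → PMF S) (Acc : Set S) (s : S) (hs : 0 < hh P Acc s) :
    ∃ n, 0 < phit P Acc n s := by
  by_contra hc
  push_neg at hc
  have : ∀ n, phit P Acc n s = 0 :=
    fun n => le_antisymm (hc n) (phit_nonneg P Acc n s)
  have : hh P Acc s = 0 := by unfold hh; simp [this]
  linarith

lemma sum_range_K_pos (P : S → PMF S) (Acc : Set S) (s : S) (hs : 0 < hh P Acc s) :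
    0 < ∑ n ∈ Finset.range (Fintype.card S), phit P Acc n s := by
  obtain ⟨n, hn⟩ := hh_pos_exists P Acc s hs
  obtain ⟨m, hm, h⟩ := reach P Acc s n hn
  exact Finset.sum_pos' (fun i _ => phit_nonneg P Acc i s) ⟨m, Finset.mem_range.2 hm, h⟩

end Reach
section Decay
variable [Fintype S] [Nonempty S]

lemma exists_decay (P : S → PMF S) (Acc : Set S) : ∃ c : ℝ, 0 < c ∧ c ≤ 1/2 ∧
    ∀ s, uu P Acc (Fintype.card S - 1) s ≤ (1 - c) * hh P Acc s := by
  classical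
  set K := Fintype.card S with hK
  have hK1 : 1 ≤ K := Fintype.card_pos
  have hKK : K - 1 + 1 = K := by omega
  by_cases hD : (Finset.univ.filter (fun s : S => 0 < hh P Acc s)).Nonempty
  · set D := Finset.univ.filter (fun s : S => 0 < hh P Acc s) with hDdef
    set δ := D.inf' hD (fun s => ∑ n ∈ Finset.range K, phit P Acc n s) with hδdef
    have hδpos : 0 < δ := by
      rw [hδdef, Finset.lt_inf'_iff]
      intro s hsD
      have : 0 < hh P Acc s := by
        rw [hDdef] at hsD; simpa using hsD
      exact sum_range_K_pos P Acc s this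
    set c := min (1/2 : ℝ) δ with hcdef
    have hc : 0 < c := lt_min (by norm_num) hδpos
    refine ⟨c, hc, min_le_left _ _, ?_⟩
    intro s
    have huu := uu_eq P Acc (K-1) s
    rw [hKK] at huu
    by_cases hs : 0 < hh P Acc s
    · have h1 : δ ≤ ∑ n ∈ Finset.range K, phit P Acc n s := by
        rw [hδdef]
        exact Finset.inf'_le _ (by rw [hDdef]; simp [hs])
      have h2 : hh P Acc s ≤ 1 := hh_le_one P Acc s
      have h3 : c ≤ δ := min_le_right _ _
      nlinarith
    · have h0 : hh P Acc s = 0 := le_antisymm (not_lt.1 hs) (hh_nonneg P Acc s)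
      have h4 := uu_le_hh P Acc (K-1) s
      rw [h0] at h4 ⊢
      linarith
  · refine ⟨1/2, by norm_num, le_rfl, ?_⟩
    intro s
    have h0 : hh P Acc s = 0 := by
      by_contra hc
      have : 0 < hh P Acc s := lt_of_le_of_ne (hh_nonneg P Acc s) (Ne.symm hc)
      exact hD ⟨s, by simp [this]⟩
    have h4 := uu_le_hh P Acc (Fintype.card S - 1) s
    rw [h0] at h4 ⊢
    linarith

lemma exists_geom (P : S → PMF S) (Acc : Set S) :
    ∃ C r : ℝ, 0 < C ∧ 0 < r ∧ r < 1 ∧ ∀ j s, uu P Acc j s ≤ C * r ^ j := by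
  classical
  obtain ⟨c, hc0, hc2, hdec⟩ := exists_decay P Acc
  set K := Fintype.card S with hK
  have hK1 : 1 ≤ K := Fintype.card_pos
  have hKK : K - 1 + 1 = K := by omega
  set q : ℝ := 1 - c with hqdef
  have hq0 : 0 < q := by rw [hqdef]; linarith
  have hq1 : q < 1 := by rw [hqdef]; linarith
  have hdec' : ∀ s, (Topb P Acc)^[K] (hh P Acc) s ≤ q * hh P Acc s := by
    intro s
    have h1 := hdec s
    have h2 : uu P Acc (K-1) = (Topb P Acc)^[K] (hh P Acc) := by
      rw [uu_iter, hKK]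
    rw [h2] at h1
    exact h1
  have iterdec : ∀ (m : ℕ) (s : S), (Topb P Acc)^[m * K] (hh P Acc) s ≤ q ^ m * hh P Acc s := by
    intro m
    induction m with
    | zero => intro s; simp
    | succ m ih =>
        intro s
        have h1 : (m+1) * K = K + m * K := by ring
        rw [h1, Function.iterate_add_apply]
        have h3 := Topb_iter_mono P Acc K (v := (Topb P Acc)^[m*K] (hh P Acc))
          (w := fun s' => q ^ m * hh P Acc s') ih s
        rw [Topb_iter_smul] at h3
        have h5 : q ^ m * (Topb P Acc)^[K] (hh P Acc) s ≤ q ^ m * (q * hh P Acc s) :=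
          mul_le_mul_of_nonneg_left (hdec' s) (pow_nonneg hq0.le m)
        calc (Topb P Acc)^[K] ((Topb P Acc)^[m*K] (hh P Acc)) s
            ≤ q ^ m * (Topb P Acc)^[K] (hh P Acc) s := by simpa using h3
          _ ≤ q ^ m * (q * hh P Acc s) := h5
          _ = q ^ (m+1) * hh P Acc s := by ring
  have huuq : ∀ (j : ℕ) (s : S), uu P Acc j s ≤ q ^ ((j+1)/K) := by
    intro j s
    set m := (j+1)/K with hm
    rcases Nat.eq_zero_or_pos m with hm0 | hm0
    · rw [hm0]
      simpa using le_trans (uu_le_hh P Acc j s) (hh_le_one P Acc s)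
    · have hKpos : 0 < K := by omega
      have hmK : m * K ≤ j + 1 := by rw [hm]; exact Nat.div_mul_le_self _ _
      have hmKpos : 0 < m * K := Nat.mul_pos hm0 hKpos
      set L := m * K with hL
      have hmK' : L ≤ j + 1 := hmK
      have hLpos : 0 < L := hmKpos
      have h1 : L - 1 ≤ j := Nat.sub_le_of_le_add hmK'
      have h2 : uu P Acc j s ≤ uu P Acc (L - 1) s := uu_antitone P Acc h1 s
      have h3 : uu P Acc (L-1) s = (Topb P Acc)^[L] (hh P Acc) s := by
        have he : L - 1 + 1 = L := Nat.succ_pred_eq_of_pos hLpos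
        rw [uu_iter, he]
      have h4 := iterdec m s
      have h5 : q ^ m * hh P Acc s ≤ q ^ m :=
        le_trans (mul_le_mul_of_nonneg_left (hh_le_one P Acc s) (pow_nonneg hq0.le m))
          (by simp)
      calc uu P Acc j s ≤ uu P Acc (L-1) s := h2
        _ = (Topb P Acc)^[L] (hh P Acc) s := h3
        _ ≤ q ^ m * hh P Acc s := by rw [hL]; exact h4
        _ ≤ q ^ m := h5
  set r : ℝ := q ^ ((K:ℝ)⁻¹) with hrdef
  have hr0 : 0 < r := Real.rpow_pos_of_pos hq0 _
  have hr1 : r < 1 := Real.rpow_lt_one hq0.le hq1 (by positivity)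
  have hrK : r ^ K = q := by
    rw [hrdef, ← Real.rpow_natCast (q ^ ((K:ℝ)⁻¹)) K, ← Real.rpow_mul hq0.le]
    rw [inv_mul_cancel₀ (by exact_mod_cast (by omega : K ≠ 0))]
    exact Real.rpow_one q
  refine ⟨q⁻¹, r, inv_pos.2 hq0, hr0, hr1, ?_⟩
  intro j s
  set m := (j+1)/K with hm
  have hdm := Nat.div_add_mod (j+1) K
  have hmod := Nat.mod_lt (j+1) (show 0 < K by omega)
  have h1 : j + 1 ≤ (m+1) * K := by
    calc j + 1 = K * m + (j+1) % K := hdm.symm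
      _ ≤ K * m + K := Nat.add_le_add_left hmod.le _
      _ = (m+1) * K := by ring
  have key : q ^ (m+1) ≤ r ^ j := by
    have h2 : r ^ ((m+1)*K) ≤ r ^ j := pow_le_pow_of_le_one hr0.le hr1.le (by omega)
    have h3 : r ^ ((m+1)*K) = q ^ (m+1) := by
      rw [mul_comm, pow_mul, hrK]
    linarith [h2, h3.symm.le]
  have h2 : uu P Acc j s ≤ q ^ m := huuq j s
  have h3 : q ^ m = q⁻¹ * q ^ (m+1) := by
    field_simp
    ring
  calc uu P Acc j s ≤ q ^ m := h2
    _ = q⁻¹ * q ^ (m+1) := h3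
    _ ≤ q⁻¹ * r ^ j := mul_le_mul_of_nonneg_left key (inv_nonneg.2 hq0.le)

lemma exists_N0 (P : S → PMF S) (Acc : Set S) : ∃ N₀ : ℕ, 1 ≤ N₀ ∧ ∀ s : S, 0 < hh P Acc s →
    (0 < ∑ n ∈ Finset.range (N₀+1), phit P Acc n s) ∧
    (Summable fun j : ℕ => (j : ℝ) * phit P Acc (N₀+1+j) s) ∧
    (∑' j : ℕ, (j:ℝ) * phit P Acc (N₀+1+j) s ≤ ∑ n ∈ Finset.range (N₀+1), phit P Acc n s) := by
  classical
  obtain ⟨C, r, hC, hr0, hr1, hgeom⟩ := exists_geom P Acc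
  set K := Fintype.card S with hK
  have hK1 : 1 ≤ K := Fintype.card_pos
  have hsum_jr : Summable (fun j : ℕ => (j:ℝ) * r ^ j) := by
    simpa using summable_pow_mul_geometric_of_norm_lt_one 1
      (r := r) (by rwa [Real.norm_eq_abs, abs_of_pos hr0])
  set T : ℝ := ∑' j : ℕ, (j:ℝ) * r ^ j with hT
  have hT0 : 0 ≤ T :=
    tsum_nonneg fun j => mul_nonneg (Nat.cast_nonneg j) (pow_nonneg hr0.le j)
  set E : ℝ := C * T with hE
  have hE0 : 0 ≤ E := mul_nonneg hC.le hT0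
  by_cases hD : (Finset.univ.filter (fun s : S => 0 < hh P Acc s)).Nonempty
  case neg =>
    refine ⟨1, le_rfl, ?_⟩
    intro s hs
    exact absurd (⟨s, by simp [hs]⟩ : (Finset.univ.filter (fun s : S => 0 < hh P Acc s)).Nonempty) hD
  case pos =>
    set D := Finset.univ.filter (fun s : S => 0 < hh P Acc s) with hDdef
    set δ := D.inf' hD (fun s => ∑ n ∈ Finset.range K, phit P Acc n s) with hδdef
    have hδpos : 0 < δ := by
      rw [hδdef, Finset.lt_inf'_iff]
      intro s hsD
      have : 0 < hh P Acc s := by rw [hDdef] at hsD; simpa using hsD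
      exact sum_range_K_pos P Acc s this
    obtain ⟨N₁, hN₁⟩ : ∃ N, (E+1) * r ^ N < δ := by
      obtain ⟨N, hN⟩ := exists_pow_lt_of_lt_one (show (0:ℝ) < δ / (E+1) by positivity) hr1
      refine ⟨N, ?_⟩
      rw [lt_div_iff₀ (by positivity)] at hN
      linarith
    set N₀ := max (max K 1) N₁ with hN₀def
    refine ⟨N₀, le_trans (le_max_right K 1) (le_max_left _ _), ?_⟩
    intro s hs
    have hKN : K ≤ N₀ := le_trans (le_max_left K 1) (le_max_left _ _)
    have hδle : δ ≤ ∑ n ∈ Finset.range K, phit P Acc n s := by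
      rw [hδdef]
      exact Finset.inf'_le _ (by rw [hDdef]; simp [hs])
    have hsub : ∑ n ∈ Finset.range K, phit P Acc n s
        ≤ ∑ n ∈ Finset.range (N₀+1), phit P Acc n s :=
      Finset.sum_le_sum_of_subset_of_nonneg (Finset.range_subset_range.2 (by omega))
        (fun i _ _ => phit_nonneg P Acc i s)
    have hS1pos : 0 < ∑ n ∈ Finset.range (N₀+1), phit P Acc n s :=
      lt_of_lt_of_le (sum_range_K_pos P Acc s hs) hsub
    have hbd : ∀ j : ℕ, (j:ℝ) * phit P Acc (N₀+1+j) s ≤ (C * r ^ N₀) * ((j:ℝ) * r ^ j) := by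
      intro j
      have h1 : phit P Acc (N₀+1+j) s ≤ uu P Acc (N₀+j) s := by
        rw [show N₀+1+j = (N₀+j)+1 by omega]
        exact phit_le_uu P Acc (N₀+j) s
      have h2 : uu P Acc (N₀+j) s ≤ C * r ^ (N₀+j) := hgeom _ s
      have h3 : phit P Acc (N₀+1+j) s ≤ C * r ^ (N₀+j) := le_trans h1 h2
      calc (j:ℝ) * phit P Acc (N₀+1+j) s ≤ (j:ℝ) * (C * r ^ (N₀+j)) :=
            mul_le_mul_of_nonneg_left h3 (Nat.cast_nonneg j)
        _ = (C * r ^ N₀) * ((j:ℝ) * r ^ j) := by rw [pow_add]; ring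
    have hsummable : Summable (fun j : ℕ => (j:ℝ) * phit P Acc (N₀+1+j) s) :=
      Summable.of_nonneg_of_le
        (fun j => mul_nonneg (Nat.cast_nonneg j) (phit_nonneg P Acc _ s)) hbd
        (hsum_jr.mul_left _)
    refine ⟨hS1pos, hsummable, ?_⟩
    have h4 : ∑' j : ℕ, (j:ℝ) * phit P Acc (N₀+1+j) s ≤ (C * r ^ N₀) * T := by
      calc ∑' j : ℕ, (j:ℝ) * phit P Acc (N₀+1+j) s
          ≤ ∑' j : ℕ, (C * r ^ N₀) * ((j:ℝ) * r ^ j) :=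
            Summable.tsum_le_tsum hbd hsummable (hsum_jr.mul_left _)
        _ = (C * r ^ N₀) * T := by rw [tsum_mul_left]
    have h5 : (C * r ^ N₀) * T = E * r ^ N₀ := by rw [hE]; ring
    have h6 : r ^ N₀ ≤ r ^ N₁ :=
      pow_le_pow_of_le_one hr0.le hr1.le (le_max_right _ _)
    have h7 : E * r ^ N₀ ≤ (E+1) * r ^ N₁ := by
      have : E * r ^ N₀ ≤ E * r ^ N₁ := mul_le_mul_of_nonneg_left h6 hE0
      nlinarith [pow_nonneg hr0.le N₁]
    linarith
end Decay
section Meas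
variable [Fintype S] [MeasurableSpace S] [MeasurableSingletonClass S]

def Cyl (n : ℕ) (x : Fin (n+1) → S) : Set (ℕ → S) := {ω | ∀ i : Fin (n+1), ω i = x i}

lemma measurableSet_cyl (n : ℕ) (x : Fin (n+1) → S) : MeasurableSet (Cyl (S := S) n x) := by
  have : Cyl (S := S) n x = ⋂ i : Fin (n+1), (fun ω : ℕ → S => ω i) ⁻¹' {x i} := by
    ext ω; simp [Cyl]
  rw [this]
  exact MeasurableSet.iInter fun i =>
    (measurable_pi_apply (i : ℕ)) (measurableSet_singleton (x i))

noncomputable def cylw (P : S → PMF S) (s : S) (n : ℕ) (x : Fin (n+1) → S) : ℝ :=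
  (if x 0 = s then (1:ℝ) else 0) * ∏ i : Fin n, stp P (x i.castSucc) (x i.succ)

lemma cyl_measure {P : S → PMF S} {μ : S → Measure (ℕ → S)} (hμ : IsPathMeasure P μ)
    (s : S) (n : ℕ) (x : Fin (n+1) → S) :
    (μ s (Cyl n x)).toReal = cylw P s n x := by
  classical
  set x' : ℕ → S := fun i => if h : i ≤ n then x ⟨i, by omega⟩ else x 0 with hx'
  have hx'le : ∀ i : ℕ, (h : i ≤ n) → x' i = x ⟨i, by omega⟩ := by
    intro i h
    rw [hx']
    exact dif_pos h
  have hset : Cyl n x = {ω : ℕ → S | ∀ i ≤ n, ω i = x' i} := by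
    ext ω
    constructor
    · intro h i hi
      rw [hx'le i hi]
      exact h ⟨i, by omega⟩
    · intro h i
      have hle : (i : ℕ) ≤ n := by omega
      have h2 := h i hle
      rw [hx'le i hle] at h2
      rw [h2]
  rw [hset, hμ.2 s n x']
  rw [ENNReal.toReal_mul, ENNReal.toReal_prod]
  have h0 : x' 0 = x 0 := by
    rw [hx'le 0 (Nat.zero_le n)]
    exact congrArg x (Fin.ext (by simp))
  unfold cylw
  congr 1
  · rw [h0]; split <;> simp
  · rw [← Fin.prod_univ_eq_prod_range (fun i => ((P (x' i)) (x' (i+1))).toReal) n]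
    refine Finset.prod_congr rfl fun i _ => ?_
    have h1 : x' (i : ℕ) = x i.castSucc := by
      rw [hx'le (i : ℕ) (le_of_lt i.isLt)]
      exact congrArg x (Fin.ext (by simp))
    have h2 : x' ((i : ℕ)+1) = x i.succ := by
      rw [hx'le ((i : ℕ)+1) (Nat.succ_le_of_lt i.isLt)]
      exact congrArg x (Fin.ext (by simp))
    rw [h1, h2]; rfl

noncomputable def Exf (P : S → PMF S) (s : S) (n : ℕ) (g : (Fin (n+1) → S) → ℝ) : ℝ :=
  ∑ x : Fin (n+1) → S, cylw P s n x * g x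

lemma integral_marg {P : S → PMF S} {μ : S → Measure (ℕ → S)} (hμ : IsPathMeasure P μ)
    (s : S) (n : ℕ) (g : (Fin (n+1) → S) → ℝ) :
    ∫ ω, g (fun i => ω i) ∂ (μ s) = Exf P s n g := by
  classical
  haveI := hμ.1 s
  have hdecomp : ∀ ω : ℕ → S,
      g (fun i => ω i) = ∑ x : Fin (n+1) → S,
        Set.indicator (Cyl n x) (fun _ => g x) ω := by
    intro ω
    rw [Finset.sum_eq_single (fun i : Fin (n+1) => ω i)]
    · rw [Set.indicator_of_mem]
      intro i; rfl
    · intro x _ hx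
      rw [Set.indicator_of_notMem]
      intro hmem
      exact hx (by funext i; exact (hmem i).symm)
    · intro h
      exact absurd (Finset.mem_univ _) h
  calc ∫ ω, g (fun i => ω i) ∂ (μ s)
      = ∫ ω, ∑ x : Fin (n+1) → S, Set.indicator (Cyl n x) (fun _ => g x) ω ∂ (μ s) := by
        exact integral_congr_ae (Filter.EventuallyEq.of_eq (funext hdecomp))
    _ = ∑ x : Fin (n+1) → S, ∫ ω, Set.indicator (Cyl n x) (fun _ => g x) ω ∂ (μ s) := by
        refine integral_finset_sum _ fun x _ => ?_
        exact (integrable_const (g x)).indicator (measurableSet_cyl n x)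
    _ = Exf P s n g := by
        refine Finset.sum_congr rfl fun x _ => ?_
        rw [integral_indicator_const (g x) (measurableSet_cyl n x), measureReal_def, cyl_measure hμ s n x,
          smul_eq_mul]

lemma cylw_zero (P : S → PMF S) (s : S) (x : Fin 1 → S) :
    cylw P s 0 x = if x 0 = s then (1:ℝ) else 0 := by
  unfold cylw
  simp

lemma cylw_cons (P : S → PMF S) (s : S) (n : ℕ) (a : S) (y : Fin (n+1) → S) :
    cylw P s (n+1) (Fin.cons a y) =
      (if a = s then (1:ℝ) else 0) *
        (stp P a (y 0) * ∏ i : Fin n, stp P (y i.castSucc) (y i.succ)) := by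
  unfold cylw
  have hx : ∀ i : Fin n, Fin.cons (α := fun _ : Fin (n+2) => S) a y (i.succ.castSucc) = y i.castSucc := by
    intro i
    rw [← Fin.succ_castSucc, Fin.cons_succ]
  simp only [Fin.prod_univ_succ, Fin.castSucc_zero, Fin.cons_zero, Fin.cons_succ, hx]

lemma Exf_zero (P : S → PMF S) (s : S) (g : (Fin 1 → S) → ℝ) :
    Exf P s 0 g = g (fun _ => s) := by
  classical
  unfold Exf
  rw [Finset.sum_eq_single (fun _ : Fin 1 => s)]
  · rw [cylw_zero]
    norm_num
  · intro x _ hx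
    have hne : x 0 ≠ s := by
      intro h
      apply hx
      funext i
      have hi : i = 0 := Subsingleton.elim _ _
      rw [hi, h]
    rw [cylw_zero, if_neg hne, zero_mul]
  · intro h
    exact absurd (Finset.mem_univ _) h

lemma Exf_succ (P : S → PMF S) (s : S) (n : ℕ) (g : (Fin (n+2) → S) → ℝ) :
    Exf P s (n+1) g = ∑ s', stp P s s' * Exf P s' n (fun y => g (Fin.cons s y)) := by
  classical
  have hL : Exf P s (n+1) g = ∑ y : Fin (n+1) → S,
      stp P s (y 0) * ((∏ i : Fin n, stp P (y i.castSucc) (y i.succ)) * g (Fin.cons s y)) := by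
    unfold Exf
    rw [← (Fin.consEquiv (fun _ : Fin (n+2) => S)).sum_comp
      (fun x => cylw P s (n+1) x * g x)]
    rw [Fintype.sum_prod_type, Finset.sum_comm]
    refine Finset.sum_congr rfl fun y _ => ?_
    have hterm : ∀ a : S,
        cylw P s (n+1) (Fin.cons a y) * g (Fin.cons a y)
          = if a = s then stp P a (y 0) *
              ((∏ i : Fin n, stp P (y i.castSucc) (y i.succ)) * g (Fin.cons a y)) else 0 := by
      intro a
      rw [cylw_cons]
      split_ifs <;> ring
    calc ∑ a : S, cylw P s (n+1) (Fin.consEquiv _ (a, y)) * g (Fin.consEquiv _ (a, y))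
        = ∑ a : S, if a = s then stp P a (y 0) *
            ((∏ i : Fin n, stp P (y i.castSucc) (y i.succ)) * g (Fin.cons a y)) else 0 := by
          refine Finset.sum_congr rfl fun a _ => ?_
          exact hterm a
      _ = stp P s (y 0) * ((∏ i : Fin n, stp P (y i.castSucc) (y i.succ)) * g (Fin.cons s y)) := by
          rw [Finset.sum_ite_eq' Finset.univ s (fun a => stp P a (y 0) *
            ((∏ i : Fin n, stp P (y i.castSucc) (y i.succ)) * g (Fin.cons a y)))]
          simp
  have hR : ∑ s', stp P s s' * Exf P s' n (fun y => g (Fin.cons s y))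
      = ∑ y : Fin (n+1) → S,
        stp P s (y 0) * ((∏ i : Fin n, stp P (y i.castSucc) (y i.succ)) * g (Fin.cons s y)) := by
    unfold Exf
    calc ∑ s', stp P s s' * ∑ y : Fin (n+1) → S, cylw P s' n y * g (Fin.cons s y)
        = ∑ s', ∑ y : Fin (n+1) → S, stp P s s' * (cylw P s' n y * g (Fin.cons s y)) := by
          refine Finset.sum_congr rfl fun s' _ => ?_
          rw [Finset.mul_sum]
      _ = ∑ y : Fin (n+1) → S, ∑ s', stp P s s' * (cylw P s' n y * g (Fin.cons s y)) := by
          rw [Finset.sum_comm]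
      _ = ∑ y : Fin (n+1) → S,
          stp P s (y 0) * ((∏ i : Fin n, stp P (y i.castSucc) (y i.succ)) * g (Fin.cons s y)) := by
          refine Finset.sum_congr rfl fun y _ => ?_
          have hterm : ∀ s' : S, stp P s s' * (cylw P s' n y * g (Fin.cons s y))
              = if y 0 = s' then stp P s s' *
                  ((∏ i : Fin n, stp P (y i.castSucc) (y i.succ)) * g (Fin.cons s y)) else 0 := by
            intro s'
            unfold cylw
            split_ifs <;> ring
          rw [Finset.sum_congr rfl (fun s' _ => hterm s')]
          rw [Finset.sum_ite_eq Finset.univ (y 0) (fun s' => stp P s s' *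
            ((∏ i : Fin n, stp P (y i.castSucc) (y i.succ)) * g (Fin.cons s y)))]
          simp
  rw [hL, hR]

end Meas
section WV
variable [Fintype S] [MeasurableSpace S] [MeasurableSingletonClass S]

lemma Exf_congr (P : S → PMF S) (s : S) (n : ℕ) {g g' : (Fin (n+1) → S) → ℝ}
    (h : ∀ y, y 0 = s → g y = g' y) : Exf P s n g = Exf P s n g' := by
  unfold Exf
  refine Finset.sum_congr rfl fun y _ => ?_
  by_cases hy : y 0 = s
  · rw [h y hy]
  · unfold cylw
    rw [if_neg hy, zero_mul, zero_mul, zero_mul]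

lemma Exf_mul (P : S → PMF S) (s : S) (n : ℕ) (a : ℝ) (g : (Fin (n+1) → S) → ℝ) :
    Exf P s n (fun y => a * g y) = a * Exf P s n g := by
  unfold Exf
  rw [Finset.mul_sum]
  exact Finset.sum_congr rfl fun y _ => by ring

noncomputable def gterm (Acc : Set S) (γacc γ rn : ℝ) (t : ℕ) : (Fin (t+2) → S) → ℝ :=
  fun y => Rw Acc γacc rn (y ⟨t+1, by omega⟩) *
    ∏ k : Fin t, Γw Acc γacc γ (y ⟨(k:ℕ)+1, by omega⟩)

noncomputable def wv (P : S → PMF S) (Acc : Set S) (γacc γ rn : ℝ) (t : ℕ) (s : S) : ℝ :=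
  Exf P s (t+1) (gterm Acc γacc γ rn t)

lemma wv_zero (P : S → PMF S) (Acc : Set S) (γacc γ rn : ℝ) (s : S) :
    wv P Acc γacc γ rn 0 s = ∑ s', stp P s s' * Rw Acc γacc rn s' := by
  unfold wv
  rw [Exf_succ]
  refine Finset.sum_congr rfl fun s' _ => ?_
  rw [Exf_zero]
  have h1 : gterm Acc γacc γ rn 0 (Fin.cons s (fun _ => s')) = Rw Acc γacc rn s' := by
    unfold gterm
    rw [show (Fin.cons (α := fun _ : Fin 2 => S) s fun _ => s') ⟨1, by omega⟩ = s' from rfl]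
    simp
  rw [h1]

lemma wv_succ (P : S → PMF S) (Acc : Set S) (γacc γ rn : ℝ) (t : ℕ) (s : S) :
    wv P Acc γacc γ rn (t+1) s
      = ∑ s', stp P s s' * (Γw Acc γacc γ s' * wv P Acc γacc γ rn t s') := by
  unfold wv
  rw [Exf_succ]
  refine Finset.sum_congr rfl fun s' _ => ?_
  congr 1
  have hpt : ∀ y : Fin (t+2) → S, y 0 = s' →
      gterm Acc γacc γ rn (t+1) (Fin.cons s y)
        = Γw Acc γacc γ s' * gterm Acc γacc γ rn t y := by
    intro y hy
    unfold gterm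
    have h1 : Fin.cons (α := fun _ : Fin (t+3) => S) s y ⟨t+2, by omega⟩
        = y ⟨t+1, by omega⟩ := by
      rw [show (⟨t+2, by omega⟩ : Fin (t+3))
        = ((⟨t+1, by omega⟩ : Fin (t+2)).succ) from rfl, Fin.cons_succ]
    have h2 : ∀ k : Fin (t+1), Fin.cons (α := fun _ : Fin (t+3) => S) s y ⟨(k:ℕ)+1, by omega⟩
        = y ⟨(k:ℕ), by omega⟩ := by
      intro k
      rw [show (⟨(k:ℕ)+1, by omega⟩ : Fin (t+3))
        = ((⟨(k:ℕ), by omega⟩ : Fin (t+2)).succ) from rfl, Fin.cons_succ]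
    rw [h1, Finset.prod_congr rfl (fun k _ => by rw [h2 k])]
    have h3 : ∏ k : Fin (t+1), Γw Acc γacc γ (y ⟨(k:ℕ), by omega⟩)
        = Γw Acc γacc γ (y 0) * ∏ k : Fin t, Γw Acc γacc γ (y ⟨(k:ℕ)+1, by omega⟩) := by
      rw [Fin.prod_univ_succ (fun k : Fin (t+1) => Γw Acc γacc γ (y ⟨(k:ℕ), by omega⟩))]
      congr 1
      all_goals first
        | exact congrArg (Γw Acc γacc γ) (congrArg y (Fin.ext rfl))
        | exact Finset.prod_congr rfl fun k _ =>
            congrArg (Γw Acc γacc γ) (congrArg y (Fin.ext rfl))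
    rw [h3, hy]
    ring
  rw [Exf_congr P s' (t+1) hpt, Exf_mul]

lemma wv_mem (P : S → PMF S) (Acc : Set S) (habs : ∀ s ∈ Acc, (P s).support ⊆ Acc)
    (γacc γ rn : ℝ) : ∀ (t : ℕ), ∀ s ∈ Acc,
    wv P Acc γacc γ rn t s = (1-γacc)*rn*γacc^t := by
  intro t
  induction t with
  | zero =>
      intro s hs
      rw [wv_zero]
      have hpt : ∀ s', stp P s s' * Rw Acc γacc rn s' = stp P s s' * ((1-γacc)*rn) := by
        intro s'
        by_cases hs' : s' ∈ Acc
        · unfold Rw; rw [if_pos hs']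
        · rw [stp_absorb habs hs hs', zero_mul, zero_mul]
      rw [Finset.sum_congr rfl (fun s' _ => hpt s'), ← Finset.sum_mul, sum_stp]
      ring
  | succ t ih =>
      intro s hs
      rw [wv_succ]
      have hpt : ∀ s', stp P s s' * (Γw Acc γacc γ s' * wv P Acc γacc γ rn t s')
          = stp P s s' * (γacc * ((1-γacc)*rn*γacc^t)) := by
        intro s'
        by_cases hs' : s' ∈ Acc
        · rw [ih s' hs']
          unfold Γw
          rw [if_pos hs']
        · rw [stp_absorb habs hs hs', zero_mul, zero_mul]
      rw [Finset.sum_congr rfl (fun s' _ => hpt s'), ← Finset.sum_mul, sum_stp]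
      ring

lemma wv_not (P : S → PMF S) (Acc : Set S) (habs : ∀ s ∈ Acc, (P s).support ⊆ Acc)
    (γacc γ rn : ℝ) : ∀ (t : ℕ), ∀ s ∉ Acc,
    wv P Acc γacc γ rn t s
      = (1-γacc)*rn * ∑ n ∈ Finset.range (t+1), γ^n * γacc^(t-n) * phit P Acc (n+1) s := by
  intro t
  induction t with
  | zero =>
      intro s hs
      rw [wv_zero]
      have hpt : ∀ s', stp P s s' * Rw Acc γacc rn s'
          = (1-γacc)*rn * (stp P s s' * phit P Acc 0 s') := by
        intro s'
        unfold Rw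
        rw [phit_zero]
        split_ifs <;> ring
      rw [Finset.sum_congr rfl (fun s' _ => hpt s'), ← Finset.mul_sum,
        ← phit_succ_not P Acc 0 hs]
      rw [Finset.sum_range_succ, Finset.sum_range_zero]
      norm_num
  | succ t ih =>
      intro s hs
      rw [wv_succ]
      have hpt : ∀ s', stp P s s' * (Γw Acc γacc γ s' * wv P Acc γacc γ rn t s')
          = γacc^(t+1) * ((1-γacc)*rn) * (stp P s s' * phit P Acc 0 s')
            + γ * ((1-γacc)*rn) * (stp P s s' *
                ∑ n ∈ Finset.range (t+1), γ^n * γacc^(t-n) * phit P Acc (n+1) s') := by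
        intro s'
        by_cases hs' : s' ∈ Acc
        · rw [wv_mem P Acc habs γacc γ rn t s' hs']
          unfold Γw
          rw [if_pos hs', phit_zero, if_pos hs']
          have hz : ∑ n ∈ Finset.range (t+1), γ^n * γacc^(t-n) * phit P Acc (n+1) s' = 0 :=
            Finset.sum_eq_zero fun n _ => by rw [phit_succ_mem P Acc n hs', mul_zero]
          rw [hz]
          ring
        · rw [ih s' hs']
          unfold Γw
          rw [if_neg hs', phit_zero, if_neg hs']
          ring
      rw [Finset.sum_congr rfl (fun s' _ => hpt s'), Finset.sum_add_distrib]
      have e1 : ∑ s', γacc^(t+1) * ((1-γacc)*rn) * (stp P s s' * phit P Acc 0 s')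
          = γacc^(t+1) * ((1-γacc)*rn) * phit P Acc (0+1) s := by
        rw [← Finset.mul_sum, ← phit_succ_not P Acc 0 hs]
      have e2 : ∑ s', γ * ((1-γacc)*rn) * (stp P s s' *
            ∑ n ∈ Finset.range (t+1), γ^n * γacc^(t-n) * phit P Acc (n+1) s')
          = γ * ((1-γacc)*rn) *
            ∑ n ∈ Finset.range (t+1), γ^n * γacc^(t-n) * phit P Acc (n+2) s := by
        rw [← Finset.mul_sum]
        congr 1
        simp only [Finset.mul_sum]
        rw [Finset.sum_comm]
        refine Finset.sum_congr rfl fun n _ => ?_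
        rw [Finset.sum_congr rfl (fun s' _ =>
          show stp P s s' * (γ ^ n * γacc ^ (t - n) * phit P Acc (n + 1) s')
            = γ ^ n * γacc ^ (t - n) * (stp P s s' * phit P Acc (n+1) s') from by ring)]
        rw [← Finset.mul_sum, ← phit_succ_not P Acc (n+1) hs]
      rw [e1, e2]
      rw [Finset.sum_range_succ' (fun n => γ^n * γacc^(t+1-n) * phit P Acc (n+1) s) (t+1)]
      have e3 : ∀ n ∈ Finset.range (t+1),
          γ^(n+1) * γacc^(t+1-(n+1)) * phit P Acc (n+1+1) s
            = γ * (γ^n * γacc^(t-n) * phit P Acc (n+2) s) := by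
        intro n _
        rw [show t+1-(n+1) = t-n by omega]
        ring
      rw [Finset.sum_congr rfl e3, ← Finset.mul_sum]
      simp only [Nat.sub_zero, pow_zero, one_mul]
      ring
end WV
section Intg
variable [Fintype S] [MeasurableSpace S] [MeasurableSingletonClass S]

lemma integral_term {P : S → PMF S} {μ : S → Measure (ℕ → S)} (hμ : IsPathMeasure P μ)
    (Acc : Set S) (γacc γ rn : ℝ) (t : ℕ) (s : S) :
    ∫ ω, Rw Acc γacc rn (ω (t+1)) * ∏ k ∈ Finset.range t, Γw Acc γacc γ (ω (k+1)) ∂ (μ s)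
      = wv P Acc γacc γ rn t s := by
  unfold wv
  rw [← integral_marg hμ s (t+1) (gterm Acc γacc γ rn t)]
  refine integral_congr_ae (Filter.EventuallyEq.of_eq (funext fun ω => ?_))
  unfold gterm
  congr 1
  rw [← Fin.prod_univ_eq_prod_range (fun k => Γw Acc γacc γ (ω (k+1))) t]

lemma val_eq_tsum {P : S → PMF S} {μ : S → Measure (ℕ → S)} (hμ : IsPathMeasure P μ)
    (Acc : Set S) {γacc γ rn : ℝ} (hγacc : 0 < γacc ∧ γacc < 1)
    (hγ0 : 0 < γ) (hγ1 : γ < 1) (s : S) :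
    Val Acc γacc γ rn μ s = ∑' t, wv P Acc γacc γ rn t s := by
  haveI := hμ.1 s
  set f : ℕ → (ℕ → S) → ℝ := fun t ω =>
    Rw Acc γacc rn (ω (t+1)) * ∏ k ∈ Finset.range t, Γw Acc γacc γ (ω (k+1)) with hf
  have hmeas : ∀ t, AEStronglyMeasurable (f t) (μ s) := by
    intro t
    apply Measurable.aestronglyMeasurable
    apply Measurable.mul
    · exact (measurable_of_countable (Rw Acc γacc rn)).comp (measurable_pi_apply (t+1))
    · apply Finset.measurable_prod
      intro k _
      exact (measurable_of_countable (Γw Acc γacc γ)).comp (measurable_pi_apply (k+1))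
  set M := max γacc γ with hM
  have hM0 : 0 < M := lt_of_lt_of_le hγacc.1 (le_max_left _ _)
  have hM1 : M < 1 := max_lt hγacc.2 hγ1
  set CC := (1 - γacc) * |rn| with hCC
  have hCC0 : 0 ≤ CC := mul_nonneg (by linarith [hγacc.2]) (abs_nonneg rn)
  have hbound : ∀ t ω, |f t ω| ≤ CC * M ^ t := by
    intro t ω
    rw [hf]
    simp only
    rw [abs_mul]
    have h1 : |Rw Acc γacc rn (ω (t+1))| ≤ CC := by
      unfold Rw
      split
      · rw [hCC, abs_mul, abs_of_nonneg (by linarith [hγacc.2] : (0:ℝ) ≤ 1 - γacc)]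
      · rw [abs_zero]; exact hCC0
    have h2 : |∏ k ∈ Finset.range t, Γw Acc γacc γ (ω (k+1))| ≤ M ^ t := by
      rw [Finset.abs_prod]
      calc ∏ k ∈ Finset.range t, |Γw Acc γacc γ (ω (k+1))|
          ≤ ∏ _k ∈ Finset.range t, M := by
            refine Finset.prod_le_prod (fun k _ => abs_nonneg _) fun k _ => ?_
            unfold Γw
            split
            · rw [abs_of_pos hγacc.1]; exact le_max_left _ _
            · rw [abs_of_pos hγ0]; exact le_max_right _ _
        _ = M ^ t := by rw [Finset.prod_const, Finset.card_range]
    exact mul_le_mul h1 h2 (abs_nonneg _) hCC0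
  have hlint : ∑' t, ∫⁻ ω, ‖f t ω‖₊ ∂ (μ s) ≠ ⊤ := by
    have h1 : ∀ t, ∫⁻ ω, (‖f t ω‖₊ : ℝ≥0∞) ∂ (μ s) ≤ ENNReal.ofReal (CC * M ^ t) := by
      intro t
      calc ∫⁻ ω, (‖f t ω‖₊ : ℝ≥0∞) ∂ (μ s)
          ≤ ∫⁻ _, ENNReal.ofReal (CC * M ^ t) ∂ (μ s) := by
            refine lintegral_mono fun ω => ?_
            rw [← ENNReal.ofReal_coe_nnreal, coe_nnnorm]
            exact ENNReal.ofReal_le_ofReal (by simpa [Real.norm_eq_abs] using hbound t ω)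
        _ = ENNReal.ofReal (CC * M ^ t) := by
            rw [lintegral_const, measure_univ, mul_one]
    have h2 : ∑' t, ∫⁻ ω, (‖f t ω‖₊ : ℝ≥0∞) ∂ (μ s)
        ≤ ∑' t : ℕ, ENNReal.ofReal (CC * M ^ t) := ENNReal.tsum_le_tsum h1
    have h3 : ∑' t : ℕ, ENNReal.ofReal (CC * M ^ t)
        = ENNReal.ofReal CC * ∑' t : ℕ, (ENNReal.ofReal M) ^ t := by
      rw [← ENNReal.tsum_mul_left]
      refine tsum_congr fun t => ?_
      rw [ENNReal.ofReal_mul hCC0, ENNReal.ofReal_pow hM0.le]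
    have h5 : (1 - ENNReal.ofReal M)⁻¹ ≠ ⊤ := by
      rw [Ne, ENNReal.inv_eq_top, tsub_eq_zero_iff_le]
      exact fun hcon => absurd (lt_of_le_of_lt hcon (ENNReal.ofReal_lt_one.2 hM1)) (lt_irrefl _)
    refine ne_top_of_le_ne_top ?_ h2
    rw [h3, ENNReal.tsum_geometric]
    exact ENNReal.mul_ne_top ENNReal.ofReal_ne_top h5
  have hval : Val Acc γacc γ rn μ s = ∫ ω, ∑' t, f t ω ∂ (μ s) := rfl
  rw [hval, integral_tsum hmeas hlint]
  exact tsum_congr fun t => integral_term hμ Acc γacc γ rn t s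

lemma summable_gphit (P : S → PMF S) (Acc : Set S) {γ : ℝ} (hγ0 : 0 < γ) (hγ1 : γ < 1)
    (s : S) : Summable fun n : ℕ => γ^n * phit P Acc (n+1) s := by
  refine Summable.of_nonneg_of_le
    (fun n => mul_nonneg (pow_nonneg hγ0.le n) (phit_nonneg P Acc _ s))
    (fun n => ?_) (summable_phit_add P Acc 1 s)
  calc γ^n * phit P Acc (n+1) s ≤ 1 * phit P Acc (n+1) s :=
        mul_le_mul_of_nonneg_right (pow_le_one₀ hγ0.le hγ1.le) (phit_nonneg P Acc _ s)
    _ = phit P Acc (n+1) s := one_mul _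

lemma val_mem {P : S → PMF S} {μ : S → Measure (ℕ → S)} (hμ : IsPathMeasure P μ)
    (Acc : Set S) (habs : ∀ s ∈ Acc, (P s).support ⊆ Acc)
    {γacc γ rn : ℝ} (hγacc : 0 < γacc ∧ γacc < 1) (hγ0 : 0 < γ) (hγ1 : γ < 1)
    {s : S} (hs : s ∈ Acc) : Val Acc γacc γ rn μ s = rn := by
  rw [val_eq_tsum hμ Acc hγacc hγ0 hγ1 s]
  rw [tsum_congr (fun t => wv_mem P Acc habs γacc γ rn t s hs)]
  rw [tsum_mul_left, tsum_geometric_of_lt_one hγacc.1.le hγacc.2]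
  have h1 : (1:ℝ) - γacc ≠ 0 := by linarith [hγacc.2]
  field_simp

lemma val_not {P : S → PMF S} {μ : S → Measure (ℕ → S)} (hμ : IsPathMeasure P μ)
    (Acc : Set S) (habs : ∀ s ∈ Acc, (P s).support ⊆ Acc)
    {γacc γ rn : ℝ} (hγacc : 0 < γacc ∧ γacc < 1) (hγ0 : 0 < γ) (hγ1 : γ < 1)
    {s : S} (hs : s ∉ Acc) :
    Val Acc γacc γ rn μ s = rn * ∑' n : ℕ, γ^n * phit P Acc (n+1) s := by
  classical
  set A : ℕ → ℕ → ℝ := fun t n =>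
    if n ≤ t then γ^n * γacc^(t-n) * phit P Acc (n+1) s else 0 with hA
  have hA_nonneg : ∀ t n, 0 ≤ A t n := by
    intro t n
    rw [hA]
    simp only
    split
    · exact mul_nonneg (mul_nonneg (pow_nonneg hγ0.le n) (pow_nonneg hγacc.1.le _))
        (phit_nonneg P Acc _ s)
    · exact le_rfl
  have hrow : ∀ t, ∑ n ∈ Finset.range (t+1), γ^n * γacc^(t-n) * phit P Acc (n+1) s
      = ∑' n, A t n := by
    intro t
    rw [tsum_eq_sum (s := Finset.range (t+1))
      (fun n hn => by rw [hA]; simp only; rw [if_neg (by simpa using hn)])]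
    refine Finset.sum_congr rfl fun n hn => ?_
    rw [hA]
    simp only
    rw [if_pos (by simpa using Nat.lt_succ_iff.1 (Finset.mem_range.1 hn))]
  have hcol_summable : ∀ n, Summable fun t => A t n := by
    intro n
    refine Summable.of_nonneg_of_le (fun t => hA_nonneg t n) (fun t => ?_)
      (((summable_geometric_of_lt_one hγacc.1.le hγacc.2)).mul_left ((γacc^n)⁻¹))
    rw [hA]
    simp only
    split
    · rename_i ht
      have h1 : γ^n * γacc^(t-n) * phit P Acc (n+1) s ≤ γacc^(t-n) := by
        have ha : γ^n ≤ 1 := pow_le_one₀ hγ0.le hγ1.le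
        have hb : (0:ℝ) ≤ γacc^(t-n) := pow_nonneg hγacc.1.le _
        have hc : phit P Acc (n+1) s ≤ 1 := phit_le_one P Acc (n+1) s
        have hd : 0 ≤ phit P Acc (n+1) s := phit_nonneg P Acc _ s
        have he : (0:ℝ) ≤ γ^n := pow_nonneg hγ0.le n
        calc γ^n * γacc^(t-n) * phit P Acc (n+1) s ≤ (1 * γacc^(t-n)) * 1 :=
              mul_le_mul (mul_le_mul ha le_rfl hb zero_le_one) hc hd (by positivity)
          _ = γacc^(t-n) := by ring
      have hq : γacc^(t-n) * γacc^n = γacc^t := by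
        rw [← pow_add]
        congr 1
        omega
      have hq2 : (γacc^n)⁻¹ * γacc^t = γacc^(t-n) := by
        have hγne : γacc ≠ 0 := ne_of_gt hγacc.1
        rw [← hq]
        field_simp
      exact h1.trans (le_of_eq hq2.symm)
    · exact mul_nonneg (inv_nonneg.2 (pow_nonneg hγacc.1.le n)) (pow_nonneg hγacc.1.le t)
  have hcol : ∀ n, ∑' t, A t n = γ^n * phit P Acc (n+1) s * (1-γacc)⁻¹ := by
    intro n
    rw [← Summable.sum_add_tsum_nat_add n (hcol_summable n)]
    have hz : ∑ t ∈ Finset.range n, A t n = 0 := by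
      refine Finset.sum_eq_zero fun t ht => ?_
      rw [hA]
      simp only
      rw [if_neg (by simpa using Finset.mem_range.1 ht)]
    rw [hz, zero_add]
    have he : ∀ j : ℕ, A (j + n) n = (γ^n * phit P Acc (n+1) s) * γacc^j := by
      intro j
      rw [hA]
      simp only
      rw [if_pos (by omega), show j + n - n = j by omega]
      ring
    rw [tsum_congr he, tsum_mul_left, tsum_geometric_of_lt_one hγacc.1.le hγacc.2]
  have hunc : Summable (fun p : ℕ × ℕ => A p.2 p.1) := by
    rw [summable_prod_of_nonneg (fun p => hA_nonneg p.2 p.1)]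
    constructor
    · exact fun n => hcol_summable n
    · refine Summable.of_nonneg_of_le
        (fun n => tsum_nonneg fun t => hA_nonneg t n) (fun n => ?_)
        ((summable_phit_add P Acc 1 s).mul_left ((1-γacc)⁻¹))
      rw [hcol n]
      have h1 : (0:ℝ) ≤ (1-γacc)⁻¹ := by
        have : (0:ℝ) < 1 - γacc := by linarith [hγacc.2]
        positivity
      calc γ^n * phit P Acc (n+1) s * (1-γacc)⁻¹
          ≤ 1 * phit P Acc (n+1) s * (1-γacc)⁻¹ := by
            refine mul_le_mul_of_nonneg_right (mul_le_mul_of_nonneg_right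
              (pow_le_one₀ hγ0.le hγ1.le) (phit_nonneg P Acc _ s)) h1
        _ = (1-γacc)⁻¹ * phit P Acc (n+1) s := by ring
  have hswap : ∑' t, ∑' n, A t n = ∑' n, ∑' t, A t n :=
    Summable.tsum_comm (f := fun n t => A t n) hunc
  rw [val_eq_tsum hμ Acc hγacc hγ0 hγ1 s]
  rw [tsum_congr (fun t => wv_not P Acc habs γacc γ rn t s hs)]
  rw [tsum_congr (fun t => by rw [hrow t]), tsum_mul_left, hswap,
    tsum_congr (fun n => hcol n), tsum_mul_right]
  have h1 : (1:ℝ) - γacc ≠ 0 := by linarith [hγacc.2]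
  field_simp
end Intg
section Safe
variable [Fintype S] [MeasurableSpace S] [MeasurableSingletonClass S]

def Ev (Acc : Set S) (n : ℕ) : Set (ℕ → S) := {ω | ω n ∈ Acc ∧ ∀ i < n, ω i ∉ Acc}

lemma measurable_Ev (Acc : Set S) (n : ℕ) : MeasurableSet (Ev (S := S) Acc n) := by
  have hA : MeasurableSet Acc := (Set.to_countable Acc).measurableSet
  have : Ev (S := S) Acc n = ((fun ω : ℕ → S => ω n) ⁻¹' Acc) ∩
      ⋂ (i : ℕ) (_ : i < n), (fun ω : ℕ → S => ω i) ⁻¹' Accᶜ := by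
    ext ω
    simp [Ev]
  rw [this]
  refine MeasurableSet.inter ((measurable_pi_apply n) hA) ?_
  refine MeasurableSet.iInter fun i => MeasurableSet.iInter fun _ => ?_
  exact (measurable_pi_apply i) hA.compl

lemma safe_compl_eq (Acc : Set S) :
    {ω : ℕ → S | ∀ t, ω t ∉ Acc}ᶜ = ⋃ n, Ev Acc n := by
  ext ω
  simp only [Set.mem_compl_iff, Set.mem_setOf_eq, not_forall, not_not, Set.mem_iUnion]
  constructor
  · rintro ⟨t, ht⟩
    have hex : ∃ t, ω t ∈ Acc := ⟨t, ht⟩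
    exact ⟨Nat.find hex, Nat.find_spec hex, fun i hi => Nat.find_min hex hi⟩
  · rintro ⟨n, hn, _⟩
    exact ⟨n, hn⟩

lemma Ev_disjoint (Acc : Set S) : Pairwise (Function.onFun Disjoint (Ev (S := S) Acc)) := by
  intro i j hij
  rw [Function.onFun, Set.disjoint_left]
  rintro ω ⟨h1, h2⟩ ⟨h3, h4⟩
  rcases lt_or_gt_of_ne hij with h | h
  · exact (h4 i h) h1
  · exact (h2 j h) h3

noncomputable def gE (Acc : Set S) (n : ℕ) : (Fin (n+1) → S) → ℝ :=
  fun x => if (x ⟨n, by omega⟩ ∈ Acc ∧ ∀ i : Fin n, x i.castSucc ∉ Acc) then 1 else 0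

lemma Exf_gE (P : S → PMF S) (Acc : Set S) :
    ∀ (n : ℕ) (s : S), Exf P s n (gE Acc n) = phit P Acc n s := by
  intro n
  induction n with
  | zero =>
      intro s
      rw [Exf_zero, phit_zero]
      unfold gE
      refine if_congr ?_ rfl rfl
      constructor
      · exact fun h => h.1
      · exact fun h => ⟨h, fun i => i.elim0⟩
  | succ n ih =>
      intro s
      rw [Exf_succ]
      have hg : ∀ y : Fin (n+1) → S,
          gE Acc (n+1) (Fin.cons s y) = if s ∈ Acc then 0 else gE Acc n y := by
        intro y
        unfold gE
        by_cases hs : s ∈ Acc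
        · rw [if_pos hs, if_neg]
          rintro ⟨_, hforall⟩
          apply hforall 0
          rw [Fin.castSucc_zero, Fin.cons_zero]
          exact hs
        · rw [if_neg hs]
          refine if_congr ?_ rfl rfl
          have hlast : Fin.cons (α := fun _ : Fin (n+2) => S) s y ⟨n+1, by omega⟩
              = y ⟨n, by omega⟩ := by
            rw [show (⟨n+1, by omega⟩ : Fin (n+2))
              = ((⟨n, by omega⟩ : Fin (n+1)).succ) from rfl, Fin.cons_succ]
          constructor
          · rintro ⟨h1, h2⟩
            refine ⟨by rwa [hlast] at h1, fun i => ?_⟩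
            have := h2 i.succ
            rwa [← Fin.succ_castSucc, Fin.cons_succ] at this
          · rintro ⟨h1, h2⟩
            refine ⟨by rwa [hlast], fun i => ?_⟩
            refine Fin.cases ?_ ?_ i
            · rw [Fin.castSucc_zero, Fin.cons_zero]
              exact hs
            · intro j
              rw [← Fin.succ_castSucc, Fin.cons_succ]
              exact h2 j
      by_cases hs : s ∈ Acc
      · rw [phit_succ_mem P Acc n hs]
        have hz : ∀ s', Exf P s' n (fun y => gE Acc (n+1) (Fin.cons s y)) = 0 := by
          intro s'
          have : (fun y : Fin (n+1) → S => gE Acc (n+1) (Fin.cons s y))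
              = fun _ => (0:ℝ) := by
            funext y
            rw [hg y, if_pos hs]
          rw [this]
          unfold Exf
          simp
        rw [Finset.sum_congr rfl (fun s' _ => by rw [hz s'])]
        simp
      · rw [phit_succ_not P Acc n hs]
        refine Finset.sum_congr rfl fun s' _ => ?_
        congr 1
        have : (fun y : Fin (n+1) → S => gE Acc (n+1) (Fin.cons s y)) = gE Acc n := by
          funext y
          rw [hg y, if_neg hs]
        rw [this, ih s']

lemma Ev_toReal {P : S → PMF S} {μ : S → Measure (ℕ → S)} (hμ : IsPathMeasure P μ)
    (Acc : Set S) (n : ℕ) (s : S) :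
    (μ s (Ev Acc n)).toReal = phit P Acc n s := by
  haveI := hμ.1 s
  have h1 : (μ s (Ev Acc n)).toReal
      = ∫ ω, Set.indicator (Ev Acc n) (fun _ => (1:ℝ)) ω ∂ (μ s) := by
    rw [integral_indicator_const 1 (measurable_Ev Acc n), smul_eq_mul, mul_one, measureReal_def]
  have h2 : ∀ ω : ℕ → S, Set.indicator (Ev Acc n) (fun _ => (1:ℝ)) ω
      = gE Acc n (fun i : Fin (n+1) => ω i) := by
    intro ω
    rw [Set.indicator_apply]
    unfold gE
    refine if_congr ?_ rfl rfl
    show ω ∈ Ev Acc n ↔ _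
    constructor
    · rintro ⟨h3, h4⟩
      exact ⟨h3, fun i => h4 i i.isLt⟩
    · rintro ⟨h3, h4⟩
      refine ⟨h3, fun i hi => ?_⟩
      exact h4 ⟨i, hi⟩
  rw [h1, integral_congr_ae (Filter.EventuallyEq.of_eq (funext h2)),
    integral_marg hμ s n (gE Acc n), Exf_gE]

lemma safe_compl_toReal {P : S → PMF S} {μ : S → Measure (ℕ → S)} (hμ : IsPathMeasure P μ)
    (Acc : Set S) (s : S) :
    (μ s {ω : ℕ → S | ∀ t, ω t ∉ Acc}ᶜ).toReal = hh P Acc s := by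
  haveI := hμ.1 s
  rw [safe_compl_eq, measure_iUnion (Ev_disjoint Acc) (fun n => measurable_Ev Acc n)]
  rw [ENNReal.tsum_toReal_eq (fun n => measure_ne_top _ _)]
  exact tsum_congr fun n => Ev_toReal hμ Acc n s

lemma safe_lt_one_iff {P : S → PMF S} {μ : S → Measure (ℕ → S)} (hμ : IsPathMeasure P μ)
    (Acc : Set S) (s : S) :
    μ s {ω : ℕ → S | ∀ t, ω t ∉ Acc} < 1 ↔ 0 < hh P Acc s := by
  haveI := hμ.1 s
  have hms : MeasurableSet {ω : ℕ → S | ∀ t, ω t ∉ Acc} := by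
    have : {ω : ℕ → S | ∀ t, ω t ∉ Acc} = ⋂ t, (fun ω : ℕ → S => ω t) ⁻¹' Accᶜ := by
      ext ω; simp
    rw [this]
    exact MeasurableSet.iInter fun t =>
      (measurable_pi_apply t) (Set.to_countable Acc).measurableSet.compl
  have hadd := measure_add_measure_compl (μ := μ s) hms
  rw [measure_univ] at hadd
  have h1 : (μ s {ω : ℕ → S | ∀ t, ω t ∉ Acc}ᶜ).toReal = hh P Acc s :=
    safe_compl_toReal hμ Acc s
  constructor
  · intro h
    have hne : μ s {ω : ℕ → S | ∀ t, ω t ∉ Acc}ᶜ ≠ 0 := by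
      intro h0
      rw [h0, add_zero] at hadd
      rw [hadd] at h
      exact lt_irrefl _ h
    rw [← h1]
    exact ENNReal.toReal_pos hne (measure_ne_top _ _)
  · intro h
    by_contra hcon
    push_neg at hcon
    have hle : μ s {ω : ℕ → S | ∀ t, ω t ∉ Acc} ≤ 1 := prob_le_one
    have heq : μ s {ω : ℕ → S | ∀ t, ω t ∉ Acc} = 1 := le_antisymm hle hcon
    rw [heq] at hadd
    have h0 : μ s {ω : ℕ → S | ∀ t, ω t ∉ Acc}ᶜ = 0 := by
      have h2 : (1:ℝ≥0∞) + μ s {ω : ℕ → S | ∀ t, ω t ∉ Acc}ᶜ = 1 + 0 := by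
        rw [add_zero]; exact hadd
      exact (ENNReal.add_right_inj (a := (1:ℝ≥0∞))
        (b := μ s {ω : ℕ → S | ∀ t, ω t ∉ Acc}ᶜ) (c := 0) ENNReal.one_ne_top).1 h2
    rw [← h1, h0] at h
    simp at h
end Safe

/-- there is an `N₀`, independent of `γ`, such that for every `γ ∈ (0,1)`
and every state `s`, the bounds `rn * μ_s(Safeᶜ) ≤ V^γ(s)` and
`V^γ(s) < rn * μ_s(Safeᶜ) * γ ^ N₀` hold iff `μ_s(Safe) < 1`. -/
theorem value_bounds_iff_not_safe_ae
    [Fintype S] [Nonempty S] [MeasurableSpace S] [MeasurableSingletonClass S]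
    (P : S → PMF S) (Acc : Set S) (μ : S → Measure (ℕ → S))
    (hμ : IsPathMeasure P μ)
    (habs : ∀ s ∈ Acc, (P s).support ⊆ Acc)
    (rn γacc : ℝ) (hrn : rn < 0) (hγacc : 0 < γacc ∧ γacc < 1) :
    ∃ N₀ : ℕ, ∀ γ : ℝ, 0 < γ → γ < 1 → ∀ s : S,
      ((rn * (μ s {ω | ∀ t, ω t ∉ Acc}ᶜ).toReal ≤ Val Acc γacc γ rn μ s ∧
          Val Acc γacc γ rn μ s < rn * (μ s {ω | ∀ t, ω t ∉ Acc}ᶜ).toReal * γ ^ N₀)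
        ↔ μ s {ω | ∀ t, ω t ∉ Acc} < 1) := by
  obtain ⟨N₀, hN₀1, hN₀⟩ := exists_N0 P Acc
  refine ⟨N₀, ?_⟩
  intro γ hγ0 hγ1 s
  have hsafeR := safe_compl_toReal hμ Acc s
  rw [hsafeR, safe_lt_one_iff hμ Acc s]
  by_cases hs : s ∈ Acc
  · have hval : Val Acc γacc γ rn μ s = rn := val_mem hμ Acc habs hγacc hγ0 hγ1 hs
    have hh1 : hh P Acc s = 1 := by
      unfold hh
      rw [Summable.tsum_eq_zero_add (summable_phit P Acc s)]
      rw [phit_zero, if_pos hs]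
      have hz : ∀ n : ℕ, phit P Acc (n+1) s = 0 := fun n => phit_succ_mem P Acc n hs
      simp [hz]
    rw [hval, hh1]
    constructor
    · intro _; norm_num
    · intro _
      refine ⟨by norm_num, ?_⟩
      have hp1 : γ ^ N₀ < 1 := pow_lt_one₀ hγ0.le hγ1 (by omega)
      nlinarith [pow_pos hγ0 N₀]
  · have hval : Val Acc γacc γ rn μ s = rn * ∑' n : ℕ, γ^n * phit P Acc (n+1) s :=
      val_not hμ Acc habs hγacc hγ0 hγ1 hs
    set A := ∑' n : ℕ, γ^n * phit P Acc (n+1) s with hAdef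
    have hhB : hh P Acc s = ∑' n : ℕ, phit P Acc (n+1) s := by
      unfold hh
      rw [Summable.tsum_eq_zero_add (summable_phit P Acc s), phit_zero, if_neg hs, zero_add]
    have hsumB : Summable (fun n : ℕ => phit P Acc (n+1) s) := summable_phit_add P Acc 1 s
    have hsumA : Summable (fun n : ℕ => γ^n * phit P Acc (n+1) s) :=
      summable_gphit P Acc hγ0 hγ1 s
    rw [hval]
    constructor
    · rintro ⟨_, hupper⟩
      by_contra hcon
      push_neg at hcon
      have hh0 : hh P Acc s = 0 := le_antisymm hcon (hh_nonneg P Acc s)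
      have hz : ∀ n : ℕ, phit P Acc (n+1) s = 0 := by
        intro n
        have hle := phit_le_hh P Acc (n+1) s
        rw [hh0] at hle
        linarith [phit_nonneg P Acc (n+1) s]
      have hA0 : A = 0 := by
        rw [hAdef, tsum_congr (fun n => by rw [hz n, mul_zero])]
        exact tsum_zero
      rw [hA0, hh0] at hupper
      simp at hupper
    · intro hpos
      obtain ⟨hS1, hsumTail, hTail⟩ := hN₀ s hpos
      obtain ⟨M0, rfl⟩ : ∃ M0, N₀ = M0 + 1 := ⟨N₀ - 1, by omega⟩
      have hshift : ∑ n ∈ Finset.range (M0+1+1), phit P Acc n s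
          = ∑ n ∈ Finset.range (M0+1), phit P Acc (n+1) s := by
        rw [Finset.sum_range_succ']
        rw [phit_zero, if_neg hs, add_zero]
      set S1 := ∑ n ∈ Finset.range (M0+1), phit P Acc (n+1) s with hS1def
      have hS1pos : 0 < S1 := by
        rw [← hshift]
        exact hS1
      have hTail' : ∑' j : ℕ, (j:ℝ) * phit P Acc (M0+1+1+j) s ≤ S1 := by
        rw [← hshift]
        exact hTail
      have hTnonneg : 0 ≤ ∑' j : ℕ, (j:ℝ) * phit P Acc (M0+1+1+j) s :=
        tsum_nonneg fun j => mul_nonneg (Nat.cast_nonneg j) (phit_nonneg P Acc _ s)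
      constructor
      · have hAB : A ≤ hh P Acc s := by
          rw [hhB, hAdef]
          refine Summable.tsum_le_tsum (fun n => ?_) hsumA hsumB
          calc γ^n * phit P Acc (n+1) s ≤ 1 * phit P Acc (n+1) s :=
                mul_le_mul_of_nonneg_right (pow_le_one₀ hγ0.le hγ1.le)
                  (phit_nonneg P Acc _ s)
            _ = _ := one_mul _
        exact mul_le_mul_of_nonpos_left hAB hrn.le
      · set b : ℕ → ℝ := fun n => (γ^n - γ^(M0+1)) * phit P Acc (n+1) s with hb
        have hsumb : Summable b := by
          refine Summable.congr (hsumA.sub (hsumB.mul_left (γ^(M0+1)))) fun n => ?_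
          rw [hb]
          ring
        have hBsum : ∑' n, b n = A - γ^(M0+1) * hh P Acc s := by
          rw [hAdef, hhB, ← tsum_mul_left (a := γ^(M0+1))]
          rw [← Summable.tsum_sub hsumA (hsumB.mul_left (γ^(M0+1)))]
          exact tsum_congr fun n => by rw [hb]; ring
        have hsplit := (Summable.sum_add_tsum_nat_add (f := b) (M0+1) hsumb).symm
        have hpart1 : (γ^M0 - γ^(M0+1)) * S1 ≤ ∑ n ∈ Finset.range (M0+1), b n := by
          rw [hS1def, Finset.mul_sum]
          refine Finset.sum_le_sum fun n hn => ?_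
          rw [hb]
          simp only
          have h1 : γ^M0 ≤ γ^n :=
            pow_le_pow_of_le_one hγ0.le hγ1.le
              (by have := Finset.mem_range.1 hn; omega)
          exact mul_le_mul_of_nonneg_right (by linarith) (phit_nonneg P Acc _ s)
        have hgeo : ∀ j : ℕ, 1 - γ^j ≤ (j:ℝ)*(1-γ) := by
          intro j
          induction j with
          | zero => simp
          | succ j ih =>
              have h1 : γ^(j+1) = γ * γ^j := by ring
              have h2 : γ^j ≤ 1 := pow_le_one₀ hγ0.le hγ1.le
              have h3 : (0:ℝ) ≤ γ^j := pow_nonneg hγ0.le j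
              push_cast
              nlinarith
        have hpart2 : -(γ^(M0+1) * (1-γ)) * ∑' j : ℕ, (j:ℝ) * phit P Acc (M0+1+1+j) s
            ≤ ∑' j : ℕ, b (j + (M0+1)) := by
          rw [← tsum_mul_left]
          refine Summable.tsum_le_tsum (fun j => ?_) (hsumTail.mul_left _)
            ((summable_nat_add_iff (M0+1)).2 hsumb)
          rw [hb]
          simp only
          rw [show j + (M0+1) + 1 = M0+1+1+j from by omega]
          have h1 : γ^(M0+1) - γ^(j + (M0+1)) ≤ γ^(M0+1) * ((j:ℝ)*(1-γ)) := by
            have h2 : γ^(j + (M0+1)) = γ^(M0+1) * γ^j := by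
              rw [← pow_add]
              congr 1
              omega
            rw [h2]
            have h3 := hgeo j
            have h4 : (0:ℝ) ≤ γ^(M0+1) := pow_nonneg hγ0.le _
            nlinarith
          have h5 : 0 ≤ phit P Acc (M0+1+1+j) s := phit_nonneg P Acc _ s
          nlinarith
        have hTle : ∑' j : ℕ, b (j + (M0+1))
            ≥ -(γ^(M0+1) * (1-γ)) * S1 := by
          refine le_trans ?_ hpart2
          have hc : 0 ≤ γ^(M0+1) * (1-γ) :=
            mul_nonneg (pow_nonneg hγ0.le _) (by linarith)
          nlinarith [hTail', hTnonneg]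
        have hpos2 : 0 < ∑' n, b n := by
          rw [hsplit]
          have key : (γ^M0 - γ^(M0+1)) * S1 - (γ^(M0+1) * (1-γ)) * S1 > 0 := by
            have h2 : 0 < γ^M0 := pow_pos hγ0 M0
            have e : (γ^M0 - γ^(M0+1)) * S1 - (γ^(M0+1) * (1-γ)) * S1
                = γ^M0 * ((1-γ)^2 * S1) := by ring
            rw [e]
            refine mul_pos h2 (mul_pos ?_ hS1pos)
            have : (0:ℝ) < 1 - γ := by linarith
            positivity
          linarith [hpart1, hTle]
        rw [hBsum] at hpos2
        have hlt : hh P Acc s * γ^(M0+1) < A := by linarith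
        have := mul_lt_mul_of_neg_left hlt hrn
        calc rn * A < rn * (hh P Acc s * γ^(M0+1)) := this
          _ = rn * hh P Acc s * γ^(M0+1) := by ring
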